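/- Let Y be a finitely generated module over Λ = O[[Γ]] (Γ ≅ Z_p) and Z ⊆ Y a free Λ-submodule. If Y contains no nonzero finite Λ-submodule, then Y/Z contains no nonzero finite Λ-submodule. -/

import Mathlib

open PowerSeries

/-- If `S` is a finite submodule and `1 - t ^ d` is a unit for all `d > 0`,
then some power of `t` annihilates `S`. -/
lemma GV_aux_kill {R M : Type*} [CommRing R] [AddCommGroup M] [Module R M]
    (S : Submodule R M) (hfin : Finite S) (t : R)
    (ht : ∀ d : ℕ, 0 < d → IsUnit (1 - t ^ d)) :
    ∃ a : ℕ, ∀ s ∈ S, t ^ a • s = 0 := by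
  obtain ⟨a, b, hab, heq⟩ := Finite.exists_ne_map_eq_of_infinite
    (fun (k : ℕ) (s : S) => (⟨t ^ k • (s : M), S.smul_mem _ s.2⟩ : S))
  wlog hlt : a < b generalizing a b
  · exact this b a hab.symm heq.symm (by omega)
  refine ⟨a, fun s hs => ?_⟩
  have hsab : t ^ a • s = t ^ b • s :=
    congrArg Subtype.val (congrFun heq ⟨s, hs⟩)
  have h0 : (t ^ a - t ^ b) • s = 0 := by
    rw [sub_smul, hsab, sub_self]
  obtain ⟨w, hw⟩ := (ht (b - a) (by omega)).exists_left_inv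
  calc t ^ a • s = (w * ((1 - t ^ (b - a)) * t ^ a)) • s := by
        rw [← mul_assoc, hw, one_mul]
    _ = w • (((1 - t ^ (b - a)) * t ^ a) • s) := by rw [mul_smul]
    _ = w • ((t ^ a - t ^ b) • s) := by
        rw [sub_mul, one_mul, ← pow_add, Nat.sub_add_cancel hlt.le]
    _ = 0 := by rw [h0, smul_zero]

theorem GV_no_finite_submodule_quotient
    (O : Type*) [CommRing O] [IsDomain O] [IsDiscreteValuationRing O]
    (Y : Type*) [AddCommGroup Y] [Module (PowerSeries O) Y]
    [Module.Finite (PowerSeries O) Y]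
    (Z : Submodule (PowerSeries O) Y) (hZ : Module.Free (PowerSeries O) Z)
    (hY : ∀ S : Submodule (PowerSeries O) Y, Finite S → S = ⊥) :
    ∀ S : Submodule (PowerSeries O) (Y ⧸ Z), Finite S → S = ⊥ := by
  intro S hSfin
  haveI := hZ
  obtain ⟨ϖ, hϖ⟩ := IsDiscreteValuationRing.exists_irreducible O
  have hϖ0 : ϖ ≠ 0 := hϖ.ne_zero
  -- a power of `C ϖ` kills `S`
  obtain ⟨m, hm⟩ := GV_aux_kill S hSfin (C (R := O) ϖ) (fun d hd => by
    rw [← map_pow, ← map_one (C (R := O)), ← map_sub]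
    exact IsUnit.map _ (IsLocalRing.isUnit_one_sub_self_of_mem_nonunits _
      (mem_nonunits_iff.2 (fun h => hϖ.not_isUnit ((isUnit_pow_iff hd.ne').1 h)))))
  -- a power of `X` kills `S`
  obtain ⟨n, hn⟩ := GV_aux_kill S hSfin (X : PowerSeries O) (fun d hd => by
    rw [isUnit_iff_constantCoeff, map_sub, map_one, map_pow, constantCoeff_X,
      zero_pow hd.ne', sub_zero]
    exact isUnit_one)
  set f : PowerSeries O := (C (R := O) ϖ) ^ m with hf
  set g : PowerSeries O := (X : PowerSeries O) ^ n with hg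
  have hf0 : f ≠ 0 := pow_ne_zero _ (fun h => hϖ0 (by
    simpa using congrArg (constantCoeff (R := O)) h))
  -- basis of Z
  let b := Module.Free.chooseBasis (PowerSeries O) Z
  have hZtf : ∀ z : Z, f • z = 0 → z = 0 := by
    intro z hz
    have : f • b.repr z = 0 := by rw [← map_smul, hz, map_zero]
    have hz0 : b.repr z = 0 := by
      refine Finsupp.ext fun i => ?_
      have := congrFun (congrArg DFunLike.coe this) i
      simp only [Finsupp.coe_smul, Pi.smul_apply, smul_eq_mul, Finsupp.coe_zero,
        Pi.zero_apply] at this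
      rcases mul_eq_zero.1 this with h | h
      · exact absurd h hf0
      · exact h
    simpa using congrArg b.repr.symm hz0
  -- the preimage of S in Y
  set E : Submodule (PowerSeries O) Y := S.comap Z.mkQ with hE
  have hZE : Z ≤ E := fun z hz => by
    simp only [hE, Submodule.mem_comap]
    have : Z.mkQ z = 0 := by
      rw [← LinearMap.mem_ker, Submodule.ker_mkQ]; exact hz
    rw [this]; exact S.zero_mem
  -- the f-torsion of Y intersected with E is finite, hence trivial
  set K : Submodule (PowerSeries O) Y := LinearMap.ker (LinearMap.lsmul (PowerSeries O) Y f)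
  have hKE : K ⊓ E = ⊥ := by
    refine hY _ ?_
    refine Finite.of_injective (fun x : (K ⊓ E : Submodule (PowerSeries O) Y) =>
      (⟨Z.mkQ x, x.2.2⟩ : S)) ?_
    intro x x' hxx'
    have hmk : Z.mkQ (x : Y) = Z.mkQ (x' : Y) := by
      simpa [Subtype.ext_iff] using hxx'
    have hsub : ((x : Y) - (x' : Y)) ∈ Z := by
      rw [← Submodule.ker_mkQ Z, LinearMap.mem_ker, map_sub, hmk, sub_self]
    have hfx : f • ((x : Y) - (x' : Y)) = 0 := by
      have h1 : f • (x : Y) = 0 := x.2.1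
      have h2 : f • (x' : Y) = 0 := x'.2.1
      rw [smul_sub, h1, h2, sub_self]
    have h0 := hZtf ⟨_, hsub⟩ (Subtype.ext hfx)
    have h0' : (x : Y) - (x' : Y) = 0 := congrArg Subtype.val h0
    exact Subtype.ext (sub_eq_zero.1 h0')
  -- main claim: E ≤ Z
  have hEZ : E ≤ Z := by
    intro e he
    have he1 : f • e ∈ Z := by
      rw [← Submodule.ker_mkQ Z, LinearMap.mem_ker, map_smul]
      exact hm _ he
    have he2 : g • e ∈ Z := by
      rw [← Submodule.ker_mkQ Z, LinearMap.mem_ker, map_smul]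
      exact hn _ he
    set u : Z := ⟨f • e, he1⟩ with hu
    set v : Z := ⟨g • e, he2⟩ with hv
    have huv : g • u = f • v := Subtype.ext (by
      show g • (f • e) = f • (g • e)
      rw [smul_smul, smul_smul, mul_comm])
    have hco : ∀ i, g * (b.repr u i) = f * (b.repr v i) := by
      intro i
      have := congrArg (fun w => b.repr w i) huv
      simpa [map_smul] using this
    have hXne : (X : PowerSeries O) ^ n ≠ 0 := pow_ne_zero _ X_ne_zero
    have hdvd : ∀ i, f ∣ b.repr u i := by
      intro i
      have hXn : (X : PowerSeries O) ^ n ∣ b.repr v i := by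
        rw [PowerSeries.X_pow_dvd_iff]
        intro j hj
        have h1 : PowerSeries.coeff (R := O) j (g * b.repr u i) = 0 := by
          refine PowerSeries.X_pow_dvd_iff.1 ?_ j hj
          rw [hg] at *
          exact dvd_mul_right _ _
        rw [hco i, hf, ← map_pow, PowerSeries.coeff_C_mul] at h1
        rcases mul_eq_zero.1 h1 with h | h
        · exact absurd h (pow_ne_zero _ hϖ0)
        · exact h
      obtain ⟨c, hc⟩ := hXn
      refine ⟨c, ?_⟩
      have heq2 : (X : PowerSeries O) ^ n * b.repr u i
          = (X : PowerSeries O) ^ n * (f * c) := by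
        calc (X : PowerSeries O) ^ n * b.repr u i = g * b.repr u i := by rw [hg]
          _ = f * ((X : PowerSeries O) ^ n * c) := by rw [hco i, hc]
          _ = (X : PowerSeries O) ^ n * (f * c) := by ring
      exact mul_left_cancel₀ hXne heq2
    classical
    let dv : PowerSeries O → PowerSeries O := fun t => if h : f ∣ t then h.choose else 0
    have hd0 : dv 0 = 0 := by
      simp only [dv, dif_pos (dvd_zero f)]
      have hsp := (dvd_zero f).choose_spec
      rcases mul_eq_zero.1 hsp.symm with h | h
      · exact absurd h hf0
      · exact h
    set c : _ →₀ PowerSeries O := Finsupp.mapRange dv hd0 (b.repr u) with hcdef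
    have hfc : f • c = b.repr u := by
      refine Finsupp.ext fun i => ?_
      have hdi := hdvd i
      simp only [Finsupp.coe_smul, Pi.smul_apply, smul_eq_mul, hcdef,
        Finsupp.mapRange_apply, dv, dif_pos hdi]
      exact hdi.choose_spec.symm
    set z : Z := b.repr.symm c with hz
    have hfz : f • z = u := by
      rw [hz, ← map_smul, hfc, LinearEquiv.symm_apply_apply]
    have h1 : f • (z : Y) = f • e := by
      have := congrArg Subtype.val hfz
      simpa using this
    have hfe : f • (e - (z : Y)) = 0 := by
      rw [smul_sub, h1, sub_self]
    have hmem : e - (z : Y) ∈ K ⊓ E := by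
      refine ⟨?_, E.sub_mem he (hZE z.2)⟩
      show e - (z : Y) ∈ K
      rw [LinearMap.mem_ker, LinearMap.lsmul_apply]
      exact hfe
    rw [hKE] at hmem
    have h2 : e = (z : Y) := by
      have := (Submodule.mem_bot _).1 hmem
      rwa [sub_eq_zero] at this
    rw [h2]
    exact z.2
  -- conclude
  rw [← Submodule.map_comap_eq_of_surjective (Z.mkQ_surjective) S]
  rw [Submodule.eq_bot_iff]
  rintro _ ⟨y, hy, rfl⟩
  have : y ∈ Z := hEZ hy
  rw [← Submodule.ker_mkQ Z] at this
  exact this
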